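/- Define the sequence b^(s)_{p,n} by b^(s)_{p,n} = 0 for 1 ≤ n ≤ (p−1)s, b^(s)_{p,n} = 1 for (p−1)s + 1 ≤ n ≤ ps + 1, and b^(s)_{p,n} = b^(s)_{p,n−1} + b^(s)_{p,n−1−ps} for n ≥ ps + 2. Then for all positive integers s, p, n, b^(s)_{p,n} = Σ_{i=0}^{⌊(n − s(p−1) − 1)/(sp+1)⌋} C(n − s(p−1) − 1 − s·p·i, i), where an empty sum (when the upper limit is negative) is 0. -/

import Mathlib

/-- The parent sequence: `bseq s p n = 0` for `n ≤ (p-1)s`, `bseq s p n = 1` for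
`(p-1)s + 1 ≤ n ≤ ps + 1`, and `bseq s p n = bseq s p (n-1) + bseq s p (n-1-ps)` for
`n ≥ ps + 2`. -/
def bseq (s p : ℕ) : ℕ → ℕ
  | n =>
    if _h : n ≤ p * s + 1 then (if n ≤ (p - 1) * s then 0 else 1)
    else bseq s p (n - 1) + bseq s p (n - 1 - p * s)
  termination_by n => n
  decreasing_by all_goals omega

lemma bseq_eq (s p n : ℕ) : bseq s p n =
    if n ≤ p * s + 1 then (if n ≤ (p - 1) * s then 0 else 1)
    else bseq s p (n - 1) + bseq s p (n - 1 - p * s) := by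
  rw [bseq]; split <;> simp_all

lemma bseq_zero (s p k : ℕ) (hk : k ≤ (p - 1) * s) : bseq s p k = 0 := by
  have h1 : (p - 1) * s ≤ p * s := Nat.mul_le_mul_right s (by omega)
  rw [bseq_eq, if_pos (by omega), if_pos hk]

lemma sum_rec (B m : ℕ) (hB : 1 ≤ B) (hm : B + 1 ≤ m) :
    ∑ i ∈ Finset.range (m / (B+1) + 1), (m - B*i).choose i
    = (∑ i ∈ Finset.range ((m-1) / (B+1) + 1), (m - 1 - B*i).choose i)
    + ∑ i ∈ Finset.range ((m-(B+1)) / (B+1) + 1), (m - (B+1) - B*i).choose i := by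
  set q := B + 1 with hq
  have hq0 : 0 < q := by omega
  obtain ⟨K, r, hmr, hr⟩ : ∃ K r, m = q * K + r ∧ r < q :=
    ⟨m / q, m % q, (Nat.div_add_mod m q).symm, Nat.mod_lt _ hq0⟩
  have hqK : q * K = B * K + K := by ring
  have hK : 1 ≤ K := by
    rcases Nat.eq_zero_or_pos K with h | h
    · subst h; simp at hmr; omega
    · exact h
  have hqK1 : q * (K - 1) + q = q * K := by
    rw [← Nat.mul_succ]; congr 1; omega
  have hdiv : m / q = K := by
    rw [hmr, Nat.mul_add_div hq0, Nat.div_eq_of_lt hr, Nat.add_zero]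
  have hdiv2 : (m - q) / q = K - 1 := by
    have h2 : m - q = q * (K - 1) + r := by omega
    rw [h2, Nat.mul_add_div hq0, Nat.div_eq_of_lt hr, Nat.add_zero]
  have hbound : ∀ i ≤ K, B * i + 1 ≤ m := by
    intro i hi
    have h1 : B * i ≤ B * K := Nat.mul_le_mul_left B hi
    omega
  have hsplit : ∑ i ∈ Finset.range (K + 1), (m - B*i).choose i
      = (∑ i ∈ Finset.range (K + 1), (m - 1 - B*i).choose i)
      + ∑ i ∈ Finset.range (K + 1), (if i = 0 then 0 else (m - 1 - B*i).choose (i-1)) := by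
    rw [← Finset.sum_add_distrib]
    apply Finset.sum_congr rfl
    intro i hi
    rw [Finset.mem_range] at hi
    rcases i with _ | j
    · simp
    · have h1 := hbound (j+1) (by omega)
      have h2 : m - B * (j+1) = (m - 1 - B * (j+1)) + 1 := by omega
      simp only [if_neg (Nat.succ_ne_zero j)]
      rw [h2, Nat.choose_succ_succ]
      simp only [Nat.add_sub_cancel]
      exact Nat.add_comm _ _
  rw [hdiv, hsplit]
  congr 1
  · -- first sums equal
    rcases Nat.eq_zero_or_pos r with hr0 | hr1
    · have hdiv1 : (m - 1) / q = K - 1 := by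
        have h2 : m - 1 = q * (K - 1) + (q - 1) := by omega
        rw [h2, Nat.mul_add_div hq0, Nat.div_eq_of_lt (by omega), Nat.add_zero]
      rw [hdiv1, Nat.sub_add_cancel hK, Finset.sum_range_succ]
      have hlast : (m - 1 - B * K).choose K = 0 := by
        apply Nat.choose_eq_zero_of_lt
        omega
      rw [hlast, Nat.add_zero]
    · have hdiv1 : (m - 1) / q = K := by
        have h2 : m - 1 = q * K + (r - 1) := by omega
        rw [h2, Nat.mul_add_div hq0, Nat.div_eq_of_lt (by omega), Nat.add_zero]
      rw [hdiv1]
  · -- second sum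
    rw [Finset.sum_range_succ', hdiv2, Nat.sub_add_cancel hK]
    simp only [Nat.succ_ne_zero, if_false, reduceIte, Nat.add_sub_cancel, add_zero]
    apply Finset.sum_congr rfl
    intro j hj
    congr 1
    have h3 : B * (j + 1) = B * j + B := by ring
    omega

lemma key (s p : ℕ) (hs : 1 ≤ s) (hp : 1 ≤ p) : ∀ m : ℕ,
    bseq s p (m + (p - 1) * s + 1)
    = ∑ i ∈ Finset.range (m / (p * s + 1) + 1), (m - p * s * i).choose i := by
  have hB : (p - 1) * s + s = p * s := by
    rcases p with _ | p'
    · omega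
    · simp only [Nat.add_sub_cancel]; ring
  have hB1 : 1 ≤ p * s := by omega
  intro m
  induction m using Nat.strong_induction_on with
  | _ m ih =>
    rcases le_or_gt m s with hms | hms
    · rw [bseq_eq, if_pos (by omega), if_neg (by omega)]
      rw [Nat.div_eq_of_lt (by omega), Finset.sum_range_one]
      simp
    · rw [bseq_eq, if_neg (by omega)]
      have e1 : m + (p - 1) * s + 1 - 1 = (m - 1) + (p - 1) * s + 1 := by omega
      rw [e1, ih (m - 1) (by omega)]
      rcases le_or_gt m (p * s) with hmB | hmB
      · have e2 : bseq s p ((m - 1) + (p - 1) * s + 1 - p * s) = 0 := by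
          apply bseq_zero
          omega
        rw [e2, Nat.add_zero]
        rw [Nat.div_eq_of_lt (by omega), Nat.div_eq_of_lt (by omega)]
        simp
      · have e2 : (m - 1) + (p - 1) * s + 1 - p * s = (m - (p * s + 1)) + (p - 1) * s + 1 := by
          omega
        rw [e2, ih (m - (p * s + 1)) (by omega)]
        exact (sum_rec (p * s) m hB1 (by omega)).symm

theorem bseq_formula (s p n : ℕ) (hs : 1 ≤ s) (hp : 1 ≤ p) (hn : 1 ≤ n) :
    bseq s p n =
      ∑ i ∈ Finset.range ((((n : ℤ) - s * (p - 1) - 1) / (s * p + 1) + 1).toNat),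
        (n - s * (p - 1) - 1 - s * p * i).choose i := by
  obtain ⟨p', rfl⟩ : ∃ p', p = p' + 1 := ⟨p - 1, by omega⟩
  have hc1 : s * p' = p' * s := mul_comm _ _
  have hc2 : s * (p' + 1) = (p' + 1) * s := mul_comm _ _
  have hc3 : (p' + 1) * s = p' * s + s := by ring
  have hcast : ((s : ℤ) * ((p' + 1 : ℕ) - 1) : ℤ) = ((s * p' : ℕ) : ℤ) := by push_cast; ring
  have hq : ((s : ℤ) * (p' + 1 : ℕ) + 1) = ((s * (p' + 1) + 1 : ℕ) : ℤ) := by push_cast; ring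
  rcases le_or_gt n (p' * s) with hn0 | hn0
  · rw [bseq_zero s (p' + 1) n (by simpa using hn0)]
    have hx : ((n : ℤ) - s * ((p' + 1 : ℕ) - 1) - 1) < 0 := by
      rw [hcast]
      have h4 : (n : ℤ) ≤ ((s * p' : ℕ) : ℤ) := by exact_mod_cast by omega
      omega
    have hd : ((n : ℤ) - s * ((p' + 1 : ℕ) - 1) - 1) / ((s : ℤ) * (p' + 1 : ℕ) + 1) < 0 := by
      apply Int.ediv_neg_of_neg_of_pos hx
      positivity
    rw [Int.toNat_of_nonpos (by omega)]
    simp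
  · obtain ⟨m, rfl⟩ : ∃ m, n = m + p' * s + 1 := ⟨n - p' * s - 1, by omega⟩
    have hx : (((m + p' * s + 1 : ℕ) : ℤ) - s * ((p' + 1 : ℕ) - 1) - 1) = ((m : ℕ) : ℤ) := by
      rw [hcast]
      have h5 : ((s * p' : ℕ) : ℤ) = ((p' * s : ℕ) : ℤ) := by exact_mod_cast hc1
      omega
    have h6 : ((m : ℤ)) / (((s * (p' + 1) + 1 : ℕ) : ℤ)) = ((m / (s * (p' + 1) + 1) : ℕ) : ℤ) := by
      exact_mod_cast (Int.natCast_ediv m _).symm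
    have hdivcast : (((m : ℤ)) / (((s * (p' + 1) + 1 : ℕ) : ℤ)) + 1).toNat
        = m / (s * (p' + 1) + 1) + 1 := by
      rw [h6, ← Nat.cast_add_one, Int.toNat_natCast]
    rw [hx, hq, hdivcast, hc2]
    have hkey := key s (p' + 1) hs hp m
    simp only [Nat.add_sub_cancel] at hkey
    rw [hkey]
    apply Finset.sum_congr rfl
    intro i _
    congr 1
    have h2 : s * ((p' + 1) - 1) = p' * s := by simp only [Nat.add_sub_cancel]; exact hc1
    omega
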